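/- Let R be a ring whose Jacobson radical J(R) contains a regular element. Then R is a left small ring, i.e. R as a left R-module is a small module. -/
import Mathlib

universe u

/-- A left `R`-module `K` is a *small module* if there exist a left `R`-module `L` and an
injective `R`-linear map `f : K → L` whose image is a superfluous submodule of `L`. -/
def IsSmallModule (R : Type u) [Ring R] (K : Type u) [AddCommGroup K] [Module R K] : Prop :=
  ∃ (L : Type u) (_ : AddCommGroup L) (_ : Module R L) (f : K →ₗ[R] L),
    Function.Injective f ∧
      ∀ X : Submodule R L, LinearMap.range f ⊔ X = ⊤ → X = ⊤

/-- If the Jacobson radical of `R` contains a regular element (neither a left nor a right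
zero divisor), then `R` is a left small ring. -/
theorem stmt_3 (R : Type u) [Ring R]
    (h : ∃ r ∈ Ideal.jacobson (⊥ : Ideal R),
      (∀ b : R, r * b = 0 → b = 0) ∧ (∀ b : R, b * r = 0 → b = 0)) :
    IsSmallModule R R := by
  obtain ⟨r, hrJ, _, hr2⟩ := h
  refine ⟨R, inferInstance, inferInstance, LinearMap.toSpanSingleton R R r, ?_, ?_⟩
  · intro a b hab
    have : (a - b) * r = 0 := by
      simpa [sub_mul, sub_eq_zero] using hab
    have := hr2 _ this
    exact sub_eq_zero.mp this
  · intro X hX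
    have hrange : LinearMap.range (LinearMap.toSpanSingleton R R r)
        = Submodule.span R {r} := (LinearMap.span_singleton_eq_range R R r).symm
    rw [hrange] at hX
    have h1 : (1 : R) ∈ Submodule.span R {r} ⊔ X := hX ▸ Submodule.mem_top
    obtain ⟨y, hy, x, hx, hxy⟩ := Submodule.mem_sup.mp h1
    obtain ⟨a, rfl⟩ := Submodule.mem_span_singleton.mp hy
    -- x - 1 = -(a • r) ∈ jacobson ⊥
    have hmem : x - 1 ∈ Ideal.jacobson (⊥ : Ideal R) := by
      have : x - 1 = -(a • r) := by
        rw [← hxy]; abel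
      rw [this]
      exact neg_mem (Submodule.smul_mem _ a hrJ)
    obtain ⟨s, hs⟩ := Ideal.exists_mul_sub_mem_of_sub_one_mem_jacobson x hmem
    rw [Ideal.mem_bot, sub_eq_zero] at hs
    rw [Submodule.eq_top_iff']
    intro z
    have : z = (z * s) • x := by rw [smul_eq_mul, mul_assoc, hs, mul_one]
    rw [this]
    exact Submodule.smul_mem X _ hx
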